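/- Let k ≥ 1 and N ≥ k, and suppose Wg : S_k → ℂ satisfies the Weingarten relation: for all index tuples a, b, c, d ∈ {1,…,N}^k, ∫_{U(N)} U_{a₁b₁}⋯U_{a_k b_k} · conj(U_{c₁d₁})⋯conj(U_{c_k d_k}) dU = Σ_{σ,τ ∈ S_k} ( ∏_{i=1}^{k} δ_{a_{τ(i)}, c_i} δ_{b_{σ(i)}, d_i} ) Wg(τσ⁻¹), where the integral is with respect to the Haar probability measure on the unitary group U(N). Then for all ρ, σ ∈ S_k: Σ_{τ ∈ S_k} N^{c(τρ⁻¹)} Wg(τσ⁻¹) = 1 if ρ = σ, and = 0 otherwise, where c(π) denotes the number of cycles of the permutation π. -/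

import Mathlib

open MeasureTheory

/-- The product σ-algebra on matrices (entrywise). -/
instance matrixMeasurableSpace {m n α : Type*} [MeasurableSpace α] :
    MeasurableSpace (Matrix m n α) :=
  inferInstanceAs (MeasurableSpace (m → n → α))

/-- The setoid on `α` whose classes are the cycles (orbits) of the permutation `σ`. -/
def Equiv.Perm.sameCycleSetoid {α : Type*} (σ : Equiv.Perm α) : Setoid α :=
  ⟨σ.SameCycle,
    ⟨fun x => Equiv.Perm.SameCycle.refl σ x, fun h => h.symm, fun h h' => h.trans h'⟩⟩

/-- The number of cycles of a permutation (fixed points count as cycles). -/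
noncomputable def Equiv.Perm.cycleCount {α : Type*} (σ : Equiv.Perm α) : ℕ :=
  Nat.card (Quotient σ.sameCycleSetoid)


lemma my_cycleCount_inv {α : Type*} (π : Equiv.Perm α) : π⁻¹.cycleCount = π.cycleCount := by
  unfold Equiv.Perm.cycleCount
  congr 1
  have : π⁻¹.sameCycleSetoid = π.sameCycleSetoid :=
    Setoid.ext fun x y => Equiv.Perm.sameCycle_inv
  rw [this]

lemma my_cycleCount_conj {α : Type*} (g π : Equiv.Perm α) :
    (g * π * g⁻¹).cycleCount = π.cycleCount := by
  unfold Equiv.Perm.cycleCount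
  refine Nat.card_congr (Quotient.congr (g.symm : α ≃ α) fun a b => ?_)
  show (g * π * g⁻¹).SameCycle a b ↔ π.SameCycle (g.symm a) (g.symm b)
  exact Equiv.Perm.sameCycle_conj

lemma my_cycleCount_comm {α : Type*} (a b : Equiv.Perm α) :
    (a * b).cycleCount = (b * a).cycleCount := by
  have := my_cycleCount_conj a (b * a)
  simpa [mul_assoc] using this

lemma my_apply_eq_of_invariant {α β : Type*} (π : Equiv.Perm α) (b : α → β)
    (hb : ∀ i, b (π i) = b i) : ∀ x y, π.SameCycle x y → b x = b y := by
  have hn : ∀ (n : ℕ) (x : α), b ((π ^ n) x) = b x := by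
    intro n
    induction n with
    | zero => simp
    | succ n ih =>
      intro x
      rw [pow_succ, Equiv.Perm.mul_apply, ih, hb]
  rintro x y ⟨n, rfl⟩
  cases n with
  | ofNat m => simpa using (hn m x).symm
  | negSucc m =>
    rw [zpow_negSucc]
    have := hn (m + 1) ((π ^ (m + 1))⁻¹ x)
    rw [← Equiv.Perm.mul_apply, mul_inv_cancel, Equiv.Perm.one_apply] at this
    exact this

lemma my_count {k N : ℕ} (π : Equiv.Perm (Fin k)) :
    (∑ b : Fin k → Fin N, if (∀ i, b (π i) = b i) then (1:ℂ) else 0)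
      = (N : ℂ) ^ π.cycleCount := by
  classical
  rw [Finset.sum_boole]
  have e : {b : Fin k → Fin N // ∀ i, b (π i) = b i}
      ≃ (Quotient π.sameCycleSetoid → Fin N) :=
    { toFun := fun b => Quotient.lift b.1 (my_apply_eq_of_invariant π b.1 b.2)
      invFun := fun f =>
        ⟨fun x => f (Quotient.mk π.sameCycleSetoid x), fun i => by
          refine congrArg f (Quotient.sound ?_)
          exact ⟨-1, by simp⟩⟩
      left_inv := fun b => by ext x; rfl
      right_inv := fun f => by
        funext q
        induction q using Quotient.ind
        rfl }
  have hcard : (Finset.univ.filter fun b : Fin k → Fin N => ∀ i, b (π i) = b i).card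
      = N ^ π.cycleCount := by
    rw [← Fintype.card_subtype]
    rw [← Nat.card_eq_fintype_card, Nat.card_congr e, Nat.card_fun]
    simp [Equiv.Perm.cycleCount]
  rw [hcard]
  push_cast
  ring

lemma my_entry_norm_le_one {N : ℕ} (u : Matrix.unitaryGroup (Fin N) ℂ) (i j : Fin N) :
    ‖(u : Matrix (Fin N) (Fin N) ℂ) i j‖ ≤ 1 := by
  have h1 : (star (u : Matrix (Fin N) (Fin N) ℂ) * (u : Matrix (Fin N) (Fin N) ℂ)) j j = 1 := by
    have := u.prop.1
    rw [this]
    simp [Matrix.one_apply]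
  rw [Matrix.mul_apply] at h1
  have h2 : ∑ m, ((‖(u : Matrix (Fin N) (Fin N) ℂ) m j‖ : ℂ) ^ 2) = 1 := by
    rw [← h1]
    refine Finset.sum_congr rfl fun m _ => ?_
    rw [Matrix.star_apply, ← Complex.conj_mul']
    rfl
  have h3 : ∑ m, ‖(u : Matrix (Fin N) (Fin N) ℂ) m j‖ ^ 2 = (1:ℝ) := by
    exact_mod_cast h2
  have h4 : ‖(u : Matrix (Fin N) (Fin N) ℂ) i j‖ ^ 2 ≤ 1 := by
    rw [← h3]
    exact Finset.single_le_sum (f := fun m => ‖(u : Matrix (Fin N) (Fin N) ℂ) m j‖ ^ 2)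
      (fun m _ => sq_nonneg _) (Finset.mem_univ i)
  nlinarith [norm_nonneg ((u : Matrix (Fin N) (Fin N) ℂ) i j)]

lemma my_measurable_entry {N : ℕ} (i j : Fin N) :
    Measurable fun u : Matrix.unitaryGroup (Fin N) ℂ =>
      (u : Matrix (Fin N) (Fin N) ℂ) i j :=
  (measurable_pi_apply j).comp ((measurable_pi_apply i).comp measurable_subtype_coe)

lemma my_integrable {k N : ℕ} (μ : Measure (Matrix.unitaryGroup (Fin N) ℂ))
    [IsProbabilityMeasure μ] (a b c d : Fin k → Fin N) :
    Integrable (fun u : Matrix.unitaryGroup (Fin N) ℂ =>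
      (∏ i, (u : Matrix (Fin N) (Fin N) ℂ) (a i) (b i)) *
        ∏ i, starRingEnd ℂ ((u : Matrix (Fin N) (Fin N) ℂ) (c i) (d i))) μ := by
  have hmeas : Measurable (fun u : Matrix.unitaryGroup (Fin N) ℂ =>
      (∏ i, (u : Matrix (Fin N) (Fin N) ℂ) (a i) (b i)) *
        ∏ i, starRingEnd ℂ ((u : Matrix (Fin N) (Fin N) ℂ) (c i) (d i))) := by
    refine Measurable.mul ?_ ?_
    · exact Finset.measurable_prod _ fun i _ => my_measurable_entry (a i) (b i)
    · exact Finset.measurable_prod _ fun i _ =>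
        (Complex.continuous_conj.measurable).comp (my_measurable_entry (c i) (d i))
  refine (integrable_const (1:ℝ)).mono' hmeas.aestronglyMeasurable
    (Filter.Eventually.of_forall fun u => ?_)
  rw [norm_mul]
  have hb1 : ‖∏ i, (u : Matrix (Fin N) (Fin N) ℂ) (a i) (b i)‖ ≤ 1 := by
    rw [norm_prod]
    exact Finset.prod_le_one (fun i _ => norm_nonneg _)
      (fun i _ => my_entry_norm_le_one u (a i) (b i))
  have hb2 : ‖∏ i, starRingEnd ℂ ((u : Matrix (Fin N) (Fin N) ℂ) (c i) (d i))‖ ≤ 1 := by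
    rw [norm_prod]
    refine Finset.prod_le_one (fun i _ => norm_nonneg _) (fun i _ => ?_)
    rw [RCLike.norm_conj]
    exact my_entry_norm_le_one u (c i) (d i)
  nlinarith [norm_nonneg (∏ i, (u : Matrix (Fin N) (Fin N) ℂ) (a i) (b i))]

lemma my_main {k N : ℕ} (hkN : k ≤ N)
    (μ : Measure (Matrix.unitaryGroup (Fin N) ℂ)) [IsProbabilityMeasure μ]
    (Wg : Equiv.Perm (Fin k) → ℂ)
    (hWg : ∀ a b c d : Fin k → Fin N,
      (∫ u : Matrix.unitaryGroup (Fin N) ℂ,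
          (∏ i, (u : Matrix (Fin N) (Fin N) ℂ) (a i) (b i)) *
            ∏ i, starRingEnd ℂ ((u : Matrix (Fin N) (Fin N) ℂ) (c i) (d i)) ∂μ) =
        ∑ σ : Equiv.Perm (Fin k), ∑ τ : Equiv.Perm (Fin k),
          (∏ i, (if a (τ i) = c i then (1:ℂ) else 0) *
              (if b (σ i) = d i then (1:ℂ) else 0)) * Wg (τ * σ⁻¹))
    (π : Equiv.Perm (Fin k)) :
    (∑ s : Equiv.Perm (Fin k), (N : ℂ) ^ (s * π⁻¹).cycleCount * Wg s⁻¹)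
      = if π = 1 then 1 else 0 := by
  classical
  set ι : Fin k → Fin N := fun i => Fin.castLE hkN i with hι_def
  have hινj : Function.Injective ι := fun i j h => Fin.castLE_injective hkN h
  -- Step 1: the Weingarten relation at (ι, b, ι, b ∘ π)
  have key : ∀ b : Fin k → Fin N,
      (∫ u : Matrix.unitaryGroup (Fin N) ℂ,
          (∏ i, (u : Matrix (Fin N) (Fin N) ℂ) (ι i) (b i)) *
            ∏ i, starRingEnd ℂ ((u : Matrix (Fin N) (Fin N) ℂ) (ι i) (b (π i))) ∂μ)
        = ∑ s : Equiv.Perm (Fin k),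
            (∏ i, if b (s i) = b (π i) then (1:ℂ) else 0) * Wg s⁻¹ := by
    intro b
    rw [hWg ι b ι (fun i => b (π i))]
    refine Finset.sum_congr rfl fun s _ => ?_
    have hcollapse : ∀ τ : Equiv.Perm (Fin k),
        (∏ i, (if ι (τ i) = ι i then (1:ℂ) else 0) *
            (if b (s i) = b (π i) then (1:ℂ) else 0))
          = (if τ = 1 then (1:ℂ) else 0) *
              ∏ i, (if b (s i) = b (π i) then (1:ℂ) else 0) := by
      intro τ
      rw [Finset.prod_mul_distrib]
      congr 1
      rw [Fintype.prod_boole]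
      have hiff : (∀ i, ι (τ i) = ι i) ↔ τ = 1 := by
        constructor
        · intro h; exact Equiv.ext fun i => hινj (h i)
        · rintro rfl i; rfl
      simp only [hiff]
    calc (∑ τ : Equiv.Perm (Fin k),
            (∏ i, (if ι (τ i) = ι i then (1:ℂ) else 0) *
              (if b (s i) = b (π i) then (1:ℂ) else 0)) * Wg (τ * s⁻¹))
        = ∑ τ : Equiv.Perm (Fin k),
            (if τ = 1 then
              (∏ i, (if b (s i) = b (π i) then (1:ℂ) else 0)) * Wg (τ * s⁻¹) else 0) := by
          refine Finset.sum_congr rfl fun τ _ => ?_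
          rw [hcollapse τ]
          by_cases h : τ = 1 <;> simp [h]
      _ = (∏ i, if b (s i) = b (π i) then (1:ℂ) else 0) * Wg s⁻¹ := by
          rw [Finset.sum_ite_eq' Finset.univ (1 : Equiv.Perm (Fin k))]
          simp
  -- Step 2: sum over all b
  have hδ : (∑ b : Fin k → Fin N, ∑ s : Equiv.Perm (Fin k),
      (∏ i, if b (s i) = b (π i) then (1:ℂ) else 0) * Wg s⁻¹)
        = if π = 1 then 1 else 0 := by
    have h0 : (∑ b : Fin k → Fin N, ∑ s : Equiv.Perm (Fin k),
        (∏ i, if b (s i) = b (π i) then (1:ℂ) else 0) * Wg s⁻¹)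
          = ∑ b : Fin k → Fin N,
            (∫ u : Matrix.unitaryGroup (Fin N) ℂ,
              (∏ i, (u : Matrix (Fin N) (Fin N) ℂ) (ι i) (b i)) *
                ∏ i, starRingEnd ℂ ((u : Matrix (Fin N) (Fin N) ℂ) (ι i) (b (π i))) ∂μ) :=
      (Finset.sum_congr rfl fun b _ => (key b).symm)
    rw [h0, ← integral_finset_sum _ (fun b _ => my_integrable μ ι b ι (fun i => b (π i)))]
    have hpt : ∀ u : Matrix.unitaryGroup (Fin N) ℂ,
        (∑ b : Fin k → Fin N,
          (∏ i, (u : Matrix (Fin N) (Fin N) ℂ) (ι i) (b i)) *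
            ∏ i, starRingEnd ℂ ((u : Matrix (Fin N) (Fin N) ℂ) (ι i) (b (π i))))
          = if π = 1 then 1 else 0 := by
      intro u
      have h1 : ∀ b : Fin k → Fin N,
          (∏ i, starRingEnd ℂ ((u : Matrix (Fin N) (Fin N) ℂ) (ι i) (b (π i))))
            = ∏ i, starRingEnd ℂ ((u : Matrix (Fin N) (Fin N) ℂ) (ι (π⁻¹ i)) (b i)) := by
        intro b
        rw [← Equiv.prod_comp π
          (fun i => starRingEnd ℂ ((u : Matrix (Fin N) (Fin N) ℂ) (ι (π⁻¹ i)) (b i)))]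
        simp
      have h2 : (∑ b : Fin k → Fin N,
          (∏ i, (u : Matrix (Fin N) (Fin N) ℂ) (ι i) (b i)) *
            ∏ i, starRingEnd ℂ ((u : Matrix (Fin N) (Fin N) ℂ) (ι i) (b (π i))))
          = ∏ i, ∑ m : Fin N,
              (u : Matrix (Fin N) (Fin N) ℂ) (ι i) m *
                starRingEnd ℂ ((u : Matrix (Fin N) (Fin N) ℂ) (ι (π⁻¹ i)) m) := by
        rw [Finset.prod_univ_sum]
        rw [Fintype.piFinset_univ]
        refine Finset.sum_congr rfl fun b _ => ?_
        rw [h1 b, Finset.prod_mul_distrib]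
      rw [h2]
      have h3 : ∀ i : Fin k, (∑ m : Fin N,
          (u : Matrix (Fin N) (Fin N) ℂ) (ι i) m *
            starRingEnd ℂ ((u : Matrix (Fin N) (Fin N) ℂ) (ι (π⁻¹ i)) m))
          = if π⁻¹ i = i then (1:ℂ) else 0 := by
        intro i
        have hmu : (u : Matrix (Fin N) (Fin N) ℂ) * star (u : Matrix (Fin N) (Fin N) ℂ) = 1 :=
          u.prop.2
        have := congrFun (congrFun hmu (ι i)) (ι (π⁻¹ i))
        rw [Matrix.mul_apply] at this
        simp only [Matrix.star_apply, Matrix.one_apply] at this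
        rw [show (∑ m : Fin N,
            (u : Matrix (Fin N) (Fin N) ℂ) (ι i) m *
              starRingEnd ℂ ((u : Matrix (Fin N) (Fin N) ℂ) (ι (π⁻¹ i)) m))
            = ∑ m : Fin N, (u : Matrix (Fin N) (Fin N) ℂ) (ι i) m *
              star ((u : Matrix (Fin N) (Fin N) ℂ) (ι (π⁻¹ i)) m) from rfl]
        rw [this]
        have : ι i = ι (π⁻¹ i) ↔ π⁻¹ i = i := ⟨fun h => (hινj h).symm, fun h => by rw [h]⟩
        simp only [this]
      calc (∏ i, ∑ m : Fin N,
            (u : Matrix (Fin N) (Fin N) ℂ) (ι i) m *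
              starRingEnd ℂ ((u : Matrix (Fin N) (Fin N) ℂ) (ι (π⁻¹ i)) m))
          = ∏ i, if π⁻¹ i = i then (1:ℂ) else 0 :=
            Finset.prod_congr rfl fun i _ => h3 i
        _ = if π = 1 then 1 else 0 := by
            rw [Fintype.prod_boole]
            have : (∀ i, π⁻¹ i = i) ↔ π = 1 := by
              constructor
              · intro h
                have : π⁻¹ = 1 := Equiv.ext fun i => h i
                simpa [inv_eq_one] using this
              · rintro rfl i; rfl
            simp only [this]
    rw [integral_congr_ae (Filter.Eventually.of_forall hpt)]
    simp
  -- Step 3: exchange sums and count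
  rw [← hδ, Finset.sum_comm]
  refine Finset.sum_congr rfl fun s _ => ?_
  rw [← Finset.sum_mul]
  congr 1
  have hiff : ∀ b : Fin k → Fin N,
      (∀ i, b (s i) = b (π i)) ↔ (∀ i, b ((s * π⁻¹) i) = b i) := by
    intro b
    constructor
    · intro h i
      have := h (π⁻¹ i)
      simpa [Equiv.Perm.mul_apply] using this
    · intro h i
      have := h (π i)
      simpa [Equiv.Perm.mul_apply] using this
  calc (N : ℂ) ^ (s * π⁻¹).cycleCount
      = ∑ b : Fin k → Fin N, if (∀ i, b ((s * π⁻¹) i) = b i) then (1:ℂ) else 0 :=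
        (my_count (s * π⁻¹)).symm
    _ = ∑ b : Fin k → Fin N, ∏ i, if b (s i) = b (π i) then (1:ℂ) else 0 := by
        refine Finset.sum_congr rfl fun b _ => ?_
        rw [Fintype.prod_boole]
        simp only [hiff b]

/-- **Convolution inverse property of the Weingarten functions** (Lemma
"Convolution inverse").  Let `μ` be the Haar probability measure on `U(N)` (a
left-invariant probability measure) and suppose `Wg : S_k → ℂ` satisfies the Weingarten
relation for moments of Haar-distributed unitaries.  Then for `N ≥ k` and all
`ρ, σ ∈ S_k`, `Σ_{τ ∈ S_k} N^{c(τρ⁻¹)} Wg(τσ⁻¹) = δ_{ρσ}`, where `c` is the number of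
cycles. -/
theorem weingarten_convolution_inverse (k N : ℕ) (hk : 1 ≤ k) (hkN : k ≤ N)
    (μ : Measure (Matrix.unitaryGroup (Fin N) ℂ)) [IsProbabilityMeasure μ]
    (hinv : ∀ g : Matrix.unitaryGroup (Fin N) ℂ, μ.map (fun u => g * u) = μ)
    (Wg : Equiv.Perm (Fin k) → ℂ)
    (hWg : ∀ a b c d : Fin k → Fin N,
      (∫ u : Matrix.unitaryGroup (Fin N) ℂ,
          (∏ i, (u : Matrix (Fin N) (Fin N) ℂ) (a i) (b i)) *
            ∏ i, starRingEnd ℂ ((u : Matrix (Fin N) (Fin N) ℂ) (c i) (d i)) ∂μ) =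
        ∑ σ : Equiv.Perm (Fin k), ∑ τ : Equiv.Perm (Fin k),
          (∏ i, (if a (τ i) = c i then (1:ℂ) else 0) *
              (if b (σ i) = d i then (1:ℂ) else 0)) * Wg (τ * σ⁻¹)) :
    ∀ ρ σ : Equiv.Perm (Fin k),
      (∑ τ : Equiv.Perm (Fin k),
          (N : ℂ) ^ (τ * ρ⁻¹).cycleCount * Wg (τ * σ⁻¹)) =
        if ρ = σ then 1 else 0 := by
  intro ρ σ
  have hmain := my_main hkN μ Wg hWg (σ * ρ⁻¹)
  have hsum := Equiv.sum_comp
    ((Equiv.inv (Equiv.Perm (Fin k))).trans (Equiv.mulRight σ))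
    (fun τ : Equiv.Perm (Fin k) => (N : ℂ) ^ (τ * ρ⁻¹).cycleCount * Wg (τ * σ⁻¹))
  rw [← hsum]
  have hterm : ∀ τ : Equiv.Perm (Fin k),
      (N : ℂ) ^ (((Equiv.inv (Equiv.Perm (Fin k))).trans (Equiv.mulRight σ)) τ * ρ⁻¹).cycleCount *
          Wg (((Equiv.inv (Equiv.Perm (Fin k))).trans (Equiv.mulRight σ)) τ * σ⁻¹)
        = (N : ℂ) ^ (τ * (σ * ρ⁻¹)⁻¹).cycleCount * Wg τ⁻¹ := by
    intro τ
    have h1 : ((Equiv.inv (Equiv.Perm (Fin k))).trans (Equiv.mulRight σ)) τ = τ⁻¹ * σ := rfl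
    rw [h1]
    have h2 : τ⁻¹ * σ * σ⁻¹ = τ⁻¹ := by group
    have h3 : (τ⁻¹ * σ * ρ⁻¹).cycleCount = (τ * (σ * ρ⁻¹)⁻¹).cycleCount := by
      rw [← my_cycleCount_inv (τ⁻¹ * σ * ρ⁻¹)]
      rw [show (τ⁻¹ * σ * ρ⁻¹)⁻¹ = (σ * ρ⁻¹)⁻¹ * τ by group]
      rw [my_cycleCount_comm]
    rw [h2, h3]
  rw [Finset.sum_congr rfl fun τ _ => hterm τ, hmain]
  have hiff : σ * ρ⁻¹ = 1 ↔ ρ = σ := by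
    rw [mul_inv_eq_one]
    exact ⟨fun h => h.symm, fun h => h.symm⟩
  simp only [hiff]
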